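/- The range (column space) of the partial transpose ρ₅₅^{T_B} equals the 5-dimensional subspace of ℂ⁹ consisting of all vectors V = (V₀,…,V₈) satisfying V₀ = 0, V₄ = 0, V₇ = V₁ + 2V₂ and V₈ = −V₁ − 2V₂ + V₃ + V₅ + V₆; equivalently, all vectors of the form (0, A, B, C, 0, D, E, A+2B, −A−2B+C+D+E) with A, B, C, D, E ∈ ℂ. -/

import Mathlib

open Matrix ComplexOrder

noncomputable def M55 : Matrix (Fin 9) (Fin 9) ℂ :=
  !![0, 0, 0, 0, 0, 0, 0, 0, 0;
     0, 2, -1, 0, 0, 0, 0, 0, 1;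
     0, -1, 1, 0, 0, 0, 0, 0, -1;
     0, 0, 0, 3, 0, -1, -1, 0, 0;
     0, 0, 0, 0, 0, 0, 0, 0, 0;
     0, 0, 0, -1, 0, 1, 1, 0, 0;
     0, 0, 0, -1, 0, 1, 1, 0, 0;
     0, 0, 0, 0, 0, 0, 0, 2, -2;
     0, 1, -1, 0, 0, 0, 0, -2, 3]

/-- The index map `(i, j) ↦ 3 i + j` from `Fin 3 × Fin 3` to `Fin 9`. -/
def idx (p : Fin 3 × Fin 3) : Fin 9 :=
  ⟨3 * p.1.val + p.2.val, by have h1 := p.1.isLt; have h2 := p.2.isLt; omega⟩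

/-- The state `ρ₅₅`, viewed as an operator on `ℂ³ ⊗ ℂ³`. -/
noncomputable def rho55 : Matrix (Fin 3 × Fin 3) (Fin 3 × Fin 3) ℂ :=
  fun p q => (1 / 13 : ℂ) * M55 (idx p) (idx q)

/-- The partial transpose on the second factor: `(ρ^{T_B})_{(i,j),(k,l)} = ρ_{(i,l),(k,j)}`. -/
noncomputable def ptrans (ρ : Matrix (Fin 3 × Fin 3) (Fin 3 × Fin 3) ℂ) :
    Matrix (Fin 3 × Fin 3) (Fin 3 × Fin 3) ℂ :=
  fun p q => ρ (p.1, q.2) (q.1, p.2)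

/-- The range of `ρ₅₅^{T_B}` consists exactly of the vectors
`(0, A, B, C, 0, D, E, A+2B, -A-2B+C+D+E)`, i.e. those `V` with
`V₀ = 0`, `V₄ = 0`, `V₇ = V₁ + 2V₂` and `V₈ = -V₁ - 2V₂ + V₃ + V₅ + V₆`. -/
lemma mulVec_entry (x : Fin 3 × Fin 3 → ℂ) (p : Fin 3 × Fin 3) :
    (ptrans rho55).mulVecLin x p =
      ∑ q : Fin 3 × Fin 3, (1 / 13 : ℂ) * M55 (idx (p.1, q.2)) (idx (q.1, p.2)) * x q := by
  simp [mulVecLin_apply, mulVec, dotProduct, ptrans, rho55]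

set_option maxHeartbeats 1000000 in
theorem rho55_ptrans_range :
    ∀ V : Fin 3 × Fin 3 → ℂ,
      V ∈ LinearMap.range (ptrans rho55).mulVecLin ↔
        (V (0, 0) = 0 ∧ V (1, 1) = 0 ∧ V (2, 1) = V (0, 1) + 2 * V (0, 2) ∧
          V (2, 2) = -V (0, 1) - 2 * V (0, 2) + V (1, 0) + V (1, 2) + V (2, 0)) := by
  intro V
  constructor
  · rintro ⟨x, rfl⟩
    refine ⟨?_, ?_, ?_, ?_⟩ <;>
    · simp only [mulVec_entry, Fintype.sum_prod_type, Fin.sum_univ_succ,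
        Fin.sum_univ_zero, idx, M55]
      norm_num [Fin.isValue, Matrix.cons_val', Matrix.cons_val_zero, Matrix.cons_val_one,
        Matrix.head_cons, Matrix.head_fin_const]
      try ring
  · rintro ⟨h0, h4, h7, h8⟩
    refine ⟨fun q =>
      ![![0, 13 * (V (0,1) + V (0,2)), 13 * (V (0,1) + 2 * V (0,2))],
        ![13 * (V (1,0) + V (1,2) + V (2,0)), 0, 13 * (V (1,0) + 2 * V (1,2) + V (2,0))],
        ![13 * (V (1,0) + V (1,2) + 2 * V (2,0)), 0, 0]] q.1 q.2, ?_⟩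
    funext p
    obtain ⟨i, j⟩ := p
    fin_cases i <;> fin_cases j <;>
    · simp only [mulVec_entry, Fintype.sum_prod_type, Fin.sum_univ_succ,
        Fin.sum_univ_zero, idx, M55, Fin.reduceFinMk]
      norm_num [Fin.isValue, Matrix.cons_val', Matrix.cons_val_zero, Matrix.cons_val_one,
        Matrix.head_cons, Matrix.head_fin_const, Matrix.vecHead, Matrix.vecTail,
        Function.comp, Matrix.cons_val_two, Matrix.cons_val_succ]
      try simp only [← Prod.mk_zero_zero] at h0 ⊢
      first
      | linear_combination -h0
      | linear_combination -h4
      | linear_combination h7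
      | linear_combination -h7
      | linear_combination h8
      | linear_combination -h8
      | ring
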